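/- Let d, n₁, n₂ be natural numbers. For each i ∈ {1, …, d}, let W_i be an n₁×α_i complex matrix and let R_i be a β_i×n₂ complex matrix. Consider the index set P of all triples (i, a, b) with i ∈ {1, …, d}, a ∈ {1, …, α_i}, b ∈ {1, …, β_i}, where the triple (i, a, b) is associated with the pair consisting of the a-th column of W_i and the b-th row of R_i. Then the maximum, over all choices of complex matrices P_i of size α_i×β_i, of rank(∑_{i=1}^d W_i · P_i · R_i) equals the maximum cardinality of a subset I ⊆ P such that the family of associated column vectors indexed by I (with repetitions counted) is linearly independent and the family of associated row vectors indexed by I (with repetitions counted) is linearly independent. -/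

import Mathlib

open Matrix Finset Equiv

variable {r : ℕ} {κ : Type*} [Fintype κ] [DecidableEq κ]

lemma det_submatrix_noninj (A : Matrix (Fin r) κ ℂ) {p : Fin r → κ}
    (h : ¬ Function.Injective p) : (A.submatrix id p).det = 0 := by
  rw [Function.not_injective_iff] at h
  obtain ⟨i, j, hp, hij⟩ := h
  exact det_zero_of_column_eq hij (fun k => by simp [submatrix, hp])

lemma det_mul_expand (A : Matrix (Fin r) κ ℂ) (B : Matrix κ (Fin r) ℂ) :
    (A * B).det = ∑ p : Fin r → κ, (A.submatrix id p).det * ∏ i, B (p i) i := by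
  calc (A * B).det
      = ∑ p : Fin r → κ, ∑ σ : Perm (Fin r),
          ((Perm.sign σ : ℤ) : ℂ) * ∏ i, (A (σ i) (p i) * B (p i) i) := by
        simp only [det_apply', mul_apply, prod_univ_sum, mul_sum, Fintype.piFinset_univ]
        rw [Finset.sum_comm]
    _ = _ := by
        refine Finset.sum_congr rfl fun p _ => ?_
        rw [det_apply', Finset.sum_mul]
        refine Finset.sum_congr rfl fun σ _ => ?_
        rw [Finset.prod_mul_distrib]
        simp [submatrix, mul_assoc]

lemma sum_inj_det (A : Matrix (Fin r) κ ℂ) (B : Matrix κ (Fin r) ℂ) :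
    ∑ p ∈ Finset.univ.filter (fun p : Fin r → κ => Function.Injective p),
      (A.submatrix id p).det * (B.submatrix p id).det
      = (Fintype.card (Perm (Fin r)) : ℂ) * (A * B).det := by
  have key : ∀ σ : Perm (Fin r),
      ∑ p ∈ Finset.univ.filter (fun p : Fin r → κ => Function.Injective p),
        ((Perm.sign σ : ℤ) : ℂ) * ((A.submatrix id p).det * ∏ i, B (p (σ i)) i)
      = (A * B).det := by
    intro σ
    have reindex : ∑ p ∈ Finset.univ.filter (fun p : Fin r → κ => Function.Injective p),
        ((Perm.sign σ : ℤ) : ℂ) * ((A.submatrix id p).det * ∏ i, B (p (σ i)) i)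
        = ∑ q ∈ Finset.univ.filter (fun p : Fin r → κ => Function.Injective p),
          (A.submatrix id q).det * ∏ i, B (q i) i := by
      refine Finset.sum_nbij' (fun p => p ∘ ⇑σ) (fun q => q ∘ ⇑σ.symm) ?_ ?_ ?_ ?_ ?_
      · intro p hp
        simp only [mem_filter, mem_univ, true_and] at hp ⊢
        exact hp.comp σ.injective
      · intro q hq
        simp only [mem_filter, mem_univ, true_and] at hq ⊢
        exact hq.comp σ.symm.injective
      · intro p _; ext i; simp
      · intro q _; ext i; simp
      · intro p hp
        have h1 : A.submatrix id (p ∘ ⇑σ) = (A.submatrix id p).submatrix id ⇑σ := rfl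
        rw [h1, det_permute']
        have h2 : ∏ i, B ((p ∘ ⇑σ) i) i = ∏ i, B (p (σ i)) i := rfl
        rw [h2]
        push_cast
        ring
    rw [reindex, det_mul_expand A B]
    refine Finset.sum_subset (Finset.filter_subset _ _) fun p _ hp => ?_
    simp only [mem_filter, mem_univ, true_and] at hp
    rw [det_submatrix_noninj A hp, zero_mul]
  calc ∑ p ∈ Finset.univ.filter (fun p : Fin r → κ => Function.Injective p),
        (A.submatrix id p).det * (B.submatrix p id).det
      = ∑ p ∈ Finset.univ.filter (fun p : Fin r → κ => Function.Injective p),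
        ∑ σ : Perm (Fin r), ((Perm.sign σ : ℤ) : ℂ) *
          ((A.submatrix id p).det * ∏ i, B (p (σ i)) i) := by
        refine Finset.sum_congr rfl fun p _ => ?_
        rw [det_apply' (B.submatrix p id), Finset.mul_sum]
        refine Finset.sum_congr rfl fun σ _ => ?_
        simp only [submatrix_apply, id_eq]
        ring
    _ = ∑ σ : Perm (Fin r), ∑ p ∈ Finset.univ.filter
          (fun p : Fin r → κ => Function.Injective p),
          ((Perm.sign σ : ℤ) : ℂ) * ((A.submatrix id p).det * ∏ i, B (p (σ i)) i) :=
        Finset.sum_comm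
    _ = ∑ _σ : Perm (Fin r), (A * B).det := by
        exact Finset.sum_congr rfl fun σ _ => key σ
    _ = _ := by rw [Finset.sum_const, card_univ, nsmul_eq_mul]

lemma cb_exists {A : Matrix (Fin r) κ ℂ} {B : Matrix κ (Fin r) ℂ}
    (h : (A * B).det ≠ 0) :
    ∃ p : Fin r → κ, Function.Injective p ∧
      (A.submatrix id p).det ≠ 0 ∧ (B.submatrix p id).det ≠ 0 := by
  by_contra hc
  push_neg at hc
  have : ∑ p ∈ Finset.univ.filter (fun p : Fin r → κ => Function.Injective p),
      (A.submatrix id p).det * (B.submatrix p id).det = 0 := by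
    refine Finset.sum_eq_zero fun p hp => ?_
    simp only [mem_filter, mem_univ, true_and] at hp
    by_cases h1 : (A.submatrix id p).det = 0
    · rw [h1, zero_mul]
    · rw [hc p hp h1, mul_zero]
  rw [sum_inj_det A B] at this
  exact (mul_ne_zero (Nat.cast_ne_zero.mpr Fintype.card_ne_zero) h) this

/-- extract `N.rank` independent columns from a matrix -/
lemma exists_indep_cols {m k : ℕ} (N : Matrix (Fin m) (Fin k) ℂ) :
    ∃ t : Fin N.rank → Fin k, LinearIndependent ℂ (fun j => Nᵀ (t j)) := by
  classical
  obtain ⟨b, hbsub, hbspan, hbind⟩ := exists_linearIndependent ℂ (Set.range Nᵀ)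
  have hfin : b.Finite := Set.Finite.subset (Set.finite_range Nᵀ) hbsub
  have : Fintype b := hfin.fintype
  have hcard : Fintype.card b = N.rank := by
    rw [rank_eq_finrank_span_cols, show N.col = Nᵀ from rfl, ← hbspan, finrank_span_set_eq_card hbind,
      Set.toFinset_card]
  let e : Fin N.rank ≃ b := (Fintype.equivFinOfCardEq hcard).symm
  choose f hf using fun x : b => Set.mem_range.mp (hbsub x.2)
  refine ⟨fun j => f (e j), ?_⟩
  have he : (fun j => Nᵀ (f (e j))) = (fun x : b => (x : Fin m → ℂ)) ∘ e := by
    funext j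
    simp only [Function.comp_apply]
    rw [hf (e j)]
  rw [he]
  exact hbind.comp e e.injective

lemma exists_sub_det {n₁ n₂ : ℕ} (M : Matrix (Fin n₁) (Fin n₂) ℂ) :
    ∃ (s : Fin M.rank → Fin n₁) (t : Fin M.rank → Fin n₂),
      (M.submatrix s t).det ≠ 0 := by
  obtain ⟨t, ht⟩ := exists_indep_cols M
  set M₁ : Matrix (Fin n₁) (Fin M.rank) ℂ := M.submatrix id t with hM₁
  have hrows : LinearIndependent ℂ (fun j => M₁ᵀ j) := ht
  have hrank₁ : M₁ᵀ.rank = M.rank := by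
    have h := LinearIndependent.rank_matrix hrows
    rw [Fintype.card_fin] at h
    exact h
  obtain ⟨s', hs'⟩ := exists_indep_cols M₁ᵀ
  let ec : Fin M.rank ≃ Fin M₁ᵀ.rank := finCongr hrank₁.symm
  refine ⟨fun j => s' (ec j), t, ?_⟩
  have hQrows : LinearIndependent ℂ
      (fun j : Fin M.rank => (M.submatrix (fun j => s' (ec j)) t) j) := by
    have : (fun j : Fin M.rank => (M.submatrix (fun j => s' (ec j)) t) j)
        = (fun j => M₁ᵀᵀ (s' j)) ∘ ec := rfl
    rw [this]
    exact hs'.comp ec ec.injective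
  have hu : IsUnit (M.submatrix (fun j => s' (ec j)) t) :=
    linearIndependent_rows_iff_isUnit.mp hQrows
  exact ((isUnit_iff_isUnit_det _).mp hu).ne_zero

lemma rank_mul_of_inj {l m n : Type*} [Fintype l] [Fintype m] [Fintype n]
    (A : Matrix l m ℂ) (B : Matrix m n ℂ)
    (h : Function.Injective A.mulVecLin) : (A * B).rank = B.rank := by
  rw [Matrix.rank, Matrix.rank, mulVecLin_mul, LinearMap.range_comp]
  exact (LinearEquiv.finrank_eq (Submodule.equivMapOfInjective _ h _)).symm

/-- the generic rank (maximum over the matrix parameters Pᵢ) of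
∑ Wᵢ Pᵢ Rᵢ equals the maximum cardinality of a jointly independent subset I of
the set of triples (i, a, b), where (i, a, b) is associated with the a-th
column of Wᵢ and the b-th row of Rᵢ. -/
theorem generic_rank_matrices_eq_max_jointly_independent (d n₁ n₂ : ℕ)
    (α β : Fin d → ℕ)
    (W : ∀ i, Matrix (Fin n₁) (Fin (α i)) ℂ)
    (R : ∀ i, Matrix (Fin (β i)) (Fin n₂) ℂ) :
    (⨆ P : ∀ i, Matrix (Fin (α i)) (Fin (β i)) ℂ,
        (∑ i, W i * P i * R i).rank) =
      ⨆ I : {I : Finset ((i : Fin d) × (Fin (α i) × Fin (β i))) //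
        LinearIndependent ℂ (fun x : I => fun a : Fin n₁ => W x.1.1 a x.1.2.1) ∧
        LinearIndependent ℂ (fun x : I => fun b : Fin n₂ => R x.1.1 x.1.2.2 b)},
        (I : Finset ((i : Fin d) × (Fin (α i) × Fin (β i)))).card := by
  classical
  set κ := (i : Fin d) × (Fin (α i) × Fin (β i)) with hκ
  set u : κ → (Fin n₁ → ℂ) := fun k a => W k.1 a k.2.1 with hu
  set v : κ → (Fin n₂ → ℂ) := fun k b => R k.1 k.2.2 b with hv
  have entry : ∀ (P : ∀ i, Matrix (Fin (α i)) (Fin (β i)) ℂ) x y,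
      (∑ i, W i * P i * R i) x y
        = ∑ k : κ, P k.1 k.2.1 k.2.2 * (u k x * v k y) := by
    intro P x y
    rw [← Finset.univ_sigma_univ, Finset.sum_sigma]
    simp only [Matrix.sum_apply, Matrix.mul_apply, Finset.sum_mul]
    refine Finset.sum_congr rfl fun i _ => ?_
    rw [Fintype.sum_prod_type, Finset.sum_comm]
    refine Finset.sum_congr rfl fun b _ => Finset.sum_congr rfl fun a _ => ?_
    ring
  -- upper bound for LHS family
  have hbddL : BddAbove (Set.range fun P : ∀ i, Matrix (Fin (α i)) (Fin (β i)) ℂ =>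
      (∑ i, W i * P i * R i).rank) := by
    refine ⟨n₁, ?_⟩
    rintro x ⟨P, rfl⟩
    exact Matrix.rank_le_height _
  have hbddR : BddAbove (Set.range fun I : {I : Finset κ //
      LinearIndependent ℂ (fun x : I => fun a : Fin n₁ => W x.1.1 a x.1.2.1) ∧
      LinearIndependent ℂ (fun x : I => fun b : Fin n₂ => R x.1.1 x.1.2.2 b)} =>
      (I : Finset κ).card) :=
    Set.Finite.bddAbove (Set.finite_range _)
  have hne : Nonempty {I : Finset κ //
      LinearIndependent ℂ (fun x : I => fun a : Fin n₁ => W x.1.1 a x.1.2.1) ∧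
      LinearIndependent ℂ (fun x : I => fun b : Fin n₂ => R x.1.1 x.1.2.2 b)} := by
    haveI : IsEmpty (↥(∅ : Finset κ)) := ⟨fun x => Finset.notMem_empty _ x.2⟩
    exact ⟨⟨∅, linearIndependent_empty_type, linearIndependent_empty_type⟩⟩
  refine le_antisymm (ciSup_le fun P => ?_) (ciSup_le fun I => ?_)
  · -- hard direction
    set M : Matrix (Fin n₁) (Fin n₂) ℂ := ∑ i, W i * P i * R i with hM
    obtain ⟨s, t, hdet⟩ := exists_sub_det M
    set c : κ → ℂ := fun k => P k.1 k.2.1 k.2.2 with hc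
    set A : Matrix (Fin M.rank) κ ℂ := fun j k => c k * u k (s j) with hA
    set B : Matrix κ (Fin M.rank) ℂ := fun k j => v k (t j) with hB
    have hAB : M.submatrix s t = A * B := by
      ext j j'
      refine (entry P (s j) (t j')).trans ?_
      rw [Matrix.mul_apply]
      exact Finset.sum_congr rfl fun k _ => by simp only [hA, hB, hc]; ring
    rw [hAB] at hdet
    obtain ⟨p, hpinj, hdA, hdB⟩ := cb_exists hdet
    -- the scalars are nonzero
    have hc0 : ∀ j, c (p j) ≠ 0 := by
      intro j hj
      exact hdA (Matrix.det_eq_zero_of_column_eq_zero j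
        (fun i => by show c (p j) * u (p j) (s i) = 0; simp [hj]))
    -- independence of u ∘ p
    have hup : LinearIndependent ℂ (u ∘ p) := by
      have hAcols : LinearIndependent ℂ (fun j => (A.submatrix id p)ᵀ j) :=
        Matrix.linearIndependent_cols_iff_isUnit.mpr
          ((Matrix.isUnit_iff_isUnit_det _).mpr (isUnit_iff_ne_zero.mpr hdA))
      have hsc : LinearIndependent ℂ (fun j => c (p j) • u (p j)) := by
        refine LinearIndependent.of_comp (LinearMap.funLeft ℂ ℂ s) ?_
        have : (LinearMap.funLeft ℂ ℂ s ∘ fun j => c (p j) • u (p j))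
            = fun j => (A.submatrix id p)ᵀ j := by
          funext j
          ext i
          simp [LinearMap.funLeft, hA, mul_comm]
          exact mul_comm _ _
        rw [this]
        exact hAcols
      set w : Fin M.rank → ℂˣ := fun j => (Units.mk0 (c (p j)) (hc0 j))⁻¹ with hw
      have h2 := hsc.units_smul w
      have heq : (w • fun j => c (p j) • u (p j)) = u ∘ p := by
        funext j
        show w j • (c (p j) • u (p j)) = u (p j)
        simp [hw, Units.smul_def, smul_smul, inv_mul_cancel₀ (hc0 j)]
      rwa [heq] at h2
    -- independence of v ∘ p
    have hvp : LinearIndependent ℂ (v ∘ p) := by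
      have hBrows : LinearIndependent ℂ (fun j => (B.submatrix p id) j) :=
        Matrix.linearIndependent_rows_iff_isUnit.mpr
          ((Matrix.isUnit_iff_isUnit_det _).mpr (isUnit_iff_ne_zero.mpr hdB))
      refine LinearIndependent.of_comp (LinearMap.funLeft ℂ ℂ t) ?_
      have : (LinearMap.funLeft ℂ ℂ t ∘ (v ∘ p))
          = fun j => (B.submatrix p id) j := by
        funext j
        ext j'
        simp [LinearMap.funLeft, hB]
        rfl
      rw [this]
      exact hBrows
    -- build the finset
    set I : Finset κ := Finset.univ.map ⟨p, hpinj⟩ with hI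
    have hmem : ∀ x : ↥I, ∃ j, p j = ↑x := by
      intro x
      have := x.2
      simp only [hI, Finset.mem_map, Finset.mem_univ, true_and,
        Function.Embedding.coeFn_mk] at this
      exact this
    have hbij : Function.Bijective (fun j => (⟨p j, by
        simp [hI, Finset.mem_map]⟩ : ↥I)) := by
      constructor
      · intro a b hab
        exact hpinj (congrArg Subtype.val hab)
      · intro x
        obtain ⟨j, hj⟩ := hmem x
        exact ⟨j, Subtype.ext hj⟩
    let e : Fin M.rank ≃ ↥I := Equiv.ofBijective _ hbij
    have hIu : LinearIndependent ℂ (fun x : ↥I => fun a : Fin n₁ => W x.1.1 a x.1.2.1) := by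
      refine (linearIndependent_equiv' e ?_).mp hup
      rfl
    have hIv : LinearIndependent ℂ (fun x : ↥I => fun b : Fin n₂ => R x.1.1 x.1.2.2 b) := by
      refine (linearIndependent_equiv' e ?_).mp hvp
      rfl
    have hcard : M.rank ≤ I.card := by
      simp [hI]
    exact hcard.trans (le_ciSup hbddR ⟨I, hIu, hIv⟩)
  · -- easy direction
    obtain ⟨I, hIu, hIv⟩ := I
    set P₀ : ∀ i, Matrix (Fin (α i)) (Fin (β i)) ℂ :=
      fun i => Matrix.of fun a b => if (⟨i, (a, b)⟩ : κ) ∈ I then (1 : ℂ) else 0 with hP₀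
    set A' : Matrix (Fin n₁) ↥I ℂ := fun x k => u ↑k x with hA'
    set B' : Matrix ↥I (Fin n₂) ℂ := fun k y => v ↑k y with hB'
    have hM₀ : (∑ i, W i * P₀ i * R i) = A' * B' := by
      ext x y
      rw [entry P₀, Matrix.mul_apply]
      have : ∀ k : κ, P₀ k.1 k.2.1 k.2.2 * (u k x * v k y)
          = if k ∈ I then u k x * v k y else 0 := by
        intro k
        simp only [hP₀, Matrix.of_apply, ite_mul, one_mul, zero_mul]
        rfl
      simp only [this]
      rw [Finset.sum_ite_mem, Finset.univ_inter, ← Finset.sum_coe_sort]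
    have hinj : Function.Injective A'.mulVecLin := by
      rw [Matrix.coe_mulVecLin, Matrix.mulVec_injective_iff]
      exact hIu
    have : (∑ i, W i * P₀ i * R i).rank = I.card := by
      rw [hM₀, rank_mul_of_inj A' B' hinj, hIv.rank_matrix, Fintype.card_coe]
    exact this.ge.trans (le_ciSup hbddL P₀)
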